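/- arXiv:1805.00469 — 3 statements merged into one kernel-verified Lean document; each statement's English description precedes it below -/
import Mathlib

section
/- The functor T sending a set X to the set of lists over X preserves pullbacks: given a pullback square of sets, applying the list functor componentwise (mapping lists) yields a pullback square. -/
/-- A commuting square of sets `p₁, p₂, f, g` is a pullback square if it satisfies
the universal property of pullbacks in `Set`. -/
def IsPbSq {P X Y Z : Type} (p₁ : P → X) (p₂ : P → Y) (f : X → Z) (g : Y → Z) : Prop :=
  (∀ a, f (p₁ a) = g (p₂ a)) ∧
  ∀ (Q : Type) (q₁ : Q → X) (q₂ : Q → Y), (∀ u, f (q₁ u) = g (q₂ u)) →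
    ∃! h : Q → P, p₁ ∘ h = q₁ ∧ p₂ ∘ h = q₂

theorem isPbSq_key {P X Y Z : Type} {p₁ : P → X} {p₂ : P → Y} {f : X → Z} {g : Y → Z}
    (h : IsPbSq p₁ p₂ f g) : ∀ x y, f x = g y → ∃! a : P, p₁ a = x ∧ p₂ a = y := by
  obtain ⟨comm, univ⟩ := h
  intro x y e
  obtain ⟨h₀, ⟨h₀1, h₀2⟩, _⟩ := univ {xy : X × Y // f xy.1 = g xy.2}
    (fun q => q.1.1) (fun q => q.1.2) (fun q => q.2)
  refine ⟨h₀ ⟨(x, y), e⟩, ⟨congrFun h₀1 _, congrFun h₀2 _⟩, ?_⟩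
  intro a' ⟨ha1, ha2⟩
  obtain ⟨k, _, hk⟩ := univ PUnit (fun _ => x) (fun _ => y) (fun _ => e)
  have e1 : (fun _ : PUnit => a') = k := hk _ ⟨funext fun _ => ha1, funext fun _ => ha2⟩
  have e2 : (fun _ : PUnit => h₀ ⟨(x, y), e⟩) = k := hk _
    ⟨funext fun _ => congrFun h₀1 _, funext fun _ => congrFun h₀2 _⟩
  exact congrFun (e1.trans e2.symm) PUnit.unit

theorem list_joint_inj {P X Y : Type} {p₁ : P → X} {p₂ : P → Y}
    (inj : ∀ a a', p₁ a = p₁ a' → p₂ a = p₂ a' → a = a') :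
    ∀ l l' : List P, l.map p₁ = l'.map p₁ → l.map p₂ = l'.map p₂ → l = l' := by
  intro l
  induction l with
  | nil => intro l' h1 _; cases l' <;> simp_all
  | cons a t ih =>
    intro l' h1 h2
    cases l' with
    | nil => simp_all
    | cons a' t' =>
      simp only [List.map_cons, List.cons.injEq] at h1 h2 ⊢
      exact ⟨inj a a' h1.1 h2.1, ih t' h1.2 h2.2⟩

theorem zip_pointwise {X Y Z : Type} {f : X → Z} {g : Y → Z} :
    ∀ (l₁ : List X) (l₂ : List Y), l₁.map f = l₂.map g →
      ∀ p ∈ l₁.zip l₂, f p.1 = g p.2 := by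
  intro l₁
  induction l₁ with
  | nil => intro l₂ _ p hp; simp at hp
  | cons a t ih =>
    intro l₂ he p hp
    cases l₂ with
    | nil => simp at hp
    | cons b t₂ =>
      simp only [List.map_cons, List.cons.injEq] at he
      rcases List.mem_cons.mp hp with hp | hp
      · exact hp ▸ he.1
      · exact ih t₂ he.2 p hp
  
/-- The list functor `T(X) = List X`, `T(f) = List.map f`, preserves pullbacks. -/
theorem list_functor_preserves_pullbacks {P X Y Z : Type}
    (p₁ : P → X) (p₂ : P → Y) (f : X → Z) (g : Y → Z)
    (h : IsPbSq p₁ p₂ f g) :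
    IsPbSq (List.map p₁) (List.map p₂) (List.map f) (List.map g) := by
  have comm := h.1
  have key := isPbSq_key h
  have inj : ∀ a a', p₁ a = p₁ a' → p₂ a = p₂ a' → a = a' := by
    intro a a' h1 h2
    obtain ⟨b, _, hb⟩ := key (p₁ a') (p₂ a') (comm a')
    exact (hb a ⟨h1, h2⟩).trans (hb a' ⟨rfl, rfl⟩).symm
  constructor
  · intro l; simp only [List.map_map]
    exact List.map_congr_left fun a _ => comm a
  · intro Q q₁ q₂ hq
    have hlen : ∀ u, (q₁ u).length = (q₂ u).length := by
      intro u
      have := congrArg List.length (hq u)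
      simpa using this
    refine ⟨fun u => List.pmap (fun xy (e : f xy.1 = g xy.2) => (key xy.1 xy.2 e).choose)
      ((q₁ u).zip (q₂ u)) (zip_pointwise _ _ (hq u)), ⟨?_, ?_⟩, ?_⟩
    · funext u
      simp only [Function.comp_apply, List.map_pmap]
      have : ∀ (xy : X × Y) (e : f xy.1 = g xy.2),
          p₁ (key xy.1 xy.2 e).choose = xy.1 := fun xy e => (key xy.1 xy.2 e).choose_spec.1.1
      calc List.pmap (fun xy e => p₁ (key xy.1 xy.2 e).choose) ((q₁ u).zip (q₂ u)) _
          = List.pmap (fun xy _ => xy.1) ((q₁ u).zip (q₂ u)) (zip_pointwise _ _ (hq u)) := by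
            apply List.pmap_congr_left; intro xy hxy e _; exact this xy e
        _ = ((q₁ u).zip (q₂ u)).map Prod.fst := List.pmap_eq_map _
        _ = q₁ u := List.map_fst_zip (le_of_eq (hlen u))
    · funext u
      simp only [Function.comp_apply, List.map_pmap]
      have : ∀ (xy : X × Y) (e : f xy.1 = g xy.2),
          p₂ (key xy.1 xy.2 e).choose = xy.2 := fun xy e => (key xy.1 xy.2 e).choose_spec.1.2
      calc List.pmap (fun xy e => p₂ (key xy.1 xy.2 e).choose) ((q₁ u).zip (q₂ u)) _
          = List.pmap (fun xy _ => xy.2) ((q₁ u).zip (q₂ u)) (zip_pointwise _ _ (hq u)) := by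
            apply List.pmap_congr_left; intro xy hxy e _; exact this xy e
        _ = ((q₁ u).zip (q₂ u)).map Prod.snd := List.pmap_eq_map _
        _ = q₂ u := List.map_snd_zip (ge_of_eq (hlen u))
    · intro h' ⟨h'1, h'2⟩
      obtain ⟨hh1, hh2⟩ : (List.map p₁ ∘ fun u => List.pmap _ ((q₁ u).zip (q₂ u)) _) = q₁ ∧
          (List.map p₂ ∘ fun u => List.pmap _ ((q₁ u).zip (q₂ u)) _) = q₂ := by
        constructor
        · funext u
          simp only [Function.comp_apply, List.map_pmap]
          calc List.pmap (fun xy e => p₁ (key xy.1 xy.2 e).choose) ((q₁ u).zip (q₂ u)) _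
              = List.pmap (fun xy _ => xy.1) ((q₁ u).zip (q₂ u)) (zip_pointwise _ _ (hq u)) := by
                apply List.pmap_congr_left; intro xy hxy e _
                exact (key xy.1 xy.2 e).choose_spec.1.1
            _ = ((q₁ u).zip (q₂ u)).map Prod.fst := List.pmap_eq_map _
            _ = q₁ u := List.map_fst_zip (le_of_eq (hlen u))
        · funext u
          simp only [Function.comp_apply, List.map_pmap]
          calc List.pmap (fun xy e => p₂ (key xy.1 xy.2 e).choose) ((q₁ u).zip (q₂ u)) _
              = List.pmap (fun xy _ => xy.2) ((q₁ u).zip (q₂ u)) (zip_pointwise _ _ (hq u)) := by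
                apply List.pmap_congr_left; intro xy hxy e _
                exact (key xy.1 xy.2 e).choose_spec.1.2
            _ = ((q₁ u).zip (q₂ u)).map Prod.snd := List.pmap_eq_map _
            _ = q₂ u := List.map_snd_zip (ge_of_eq (hlen u))
      funext u
      exact list_joint_inj inj _ _
        ((congrFun h'1 u).trans (congrFun hh1 u).symm)
        ((congrFun h'2 u).trans (congrFun hh2 u).symm)
end

section
/- Every naturality square of the multiplication μ of the list monad is a pullback: for any function f : X → Y, the square with top μ_X : List(List X) → List X, bottom μ_Y, left List(List f), right List f, is a pullback of sets. -/
/-- Split a list into chunks whose lengths match the shape of `ys`. -/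
def listSplit {X Y : Type} : List X → List (List Y) → List (List X)
  | _, [] => []
  | l, y :: ys => l.take y.length :: listSplit (l.drop y.length) ys

lemma listSplit_flatten {X Y : Type} (f : X → Y) :
    ∀ (ys : List (List Y)) (l : List X), List.map f l = ys.flatten →
      (listSplit l ys).flatten = l := by
  intro ys
  induction ys with
  | nil => intro l h; simp_all [listSplit]
  | cons y ys ih =>
    intro l h
    have hd : List.map f (l.drop y.length) = ys.flatten := by
      rw [List.map_drop, h, List.flatten_cons, List.drop_append_of_le_length le_rfl]
      simp
    simp [listSplit, ih _ hd]

lemma listSplit_map {X Y : Type} (f : X → Y) :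
    ∀ (ys : List (List Y)) (l : List X), List.map f l = ys.flatten →
      (listSplit l ys).map (List.map f) = ys := by
  intro ys
  induction ys with
  | nil => intro l h; simp [listSplit]
  | cons y ys ih =>
    intro l h
    have hd : List.map f (l.drop y.length) = ys.flatten := by
      rw [List.map_drop, h, List.flatten_cons, List.drop_append_of_le_length le_rfl]
      simp
    have ht : List.map f (l.take y.length) = y := by
      rw [List.map_take, h, List.flatten_cons, List.take_append_of_le_length le_rfl]
      simp
    simp [listSplit, ih _ hd, ht]

lemma listSplit_unique {X Y : Type} (f : X → Y) :
    ∀ (ll : List (List X)) (l : List X) (ys : List (List Y)),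
      ll.flatten = l → ll.map (List.map f) = ys → ll = listSplit l ys := by
  intro ll
  induction ll with
  | nil => intro l ys h1 h2; subst h1; subst h2; rfl
  | cons a ll ih =>
    intro l ys h1 h2
    subst h1; subst h2
    simp only [List.map_cons, List.flatten_cons, listSplit, List.length_map]
    congr 1
    · rw [List.take_append_of_le_length le_rfl]; simp
    · rw [List.drop_append_of_le_length le_rfl]
      simpa using ih ll.flatten (ll.map (List.map f)) rfl rfl

/-- Every naturality square of the multiplication `μ` (flattening/join) of the list monad
is a pullback: for `f : X → Y`, the square with top `μ_X : List (List X) → List X`,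
left `List (List f)`, right `List f`, bottom `μ_Y`, is a pullback of sets. -/
theorem list_mu_naturality_square_is_pullback {X Y : Type} (f : X → Y) :
    IsPbSq (List.flatten : List (List X) → List X) (List.map (List.map f))
      (List.map f) (List.flatten : List (List Y) → List Y) := by
  constructor
  · intro a; simp [List.map_flatten]
  · intro Q q₁ q₂ hcomm
    refine ⟨fun u => listSplit (q₁ u) (q₂ u), ⟨?_, ?_⟩, ?_⟩
    · funext u; exact listSplit_flatten f _ _ (hcomm u)
    · funext u; exact listSplit_map f _ _ (hcomm u)
    · intro g ⟨hg1, hg2⟩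
      funext u
      exact listSplit_unique f (g u) (q₁ u) (q₂ u) (congrFun hg1 u) (congrFun hg2 u)
end

section
/- For a fixed graded set b : B → ℕ, the functor − □ B : GrdSet → GrdSet has a right adjoint [B, −], i.e., there is a natural bijection Hom_GrdSet(A □ B, C) ≅ Hom_GrdSet(A, [B, C]); hence the composition tensor product on graded sets is right closed. -/
/-- The underlying set of the composition tensor product `X □ Y` of graded sets
`x : X → ℕ`, `y : Y → ℕ`: pairs `(a, ψ)` with `ψ` a list over `Y` of length `x a`. -/
def Sq {X Y : Type} (x : X → ℕ) (y : Y → ℕ) : Type :=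
  {p : X × List Y // x p.1 = p.2.length}

/-- The arity map of `X □ Y`: the sum of the arities of the entries of the list. -/
def SqAr {X Y : Type} (x : X → ℕ) (y : Y → ℕ) : Sq x y → ℕ :=
  fun p => (p.val.2.map y).sum

/-- The internal hom `[B, C]` of graded sets with respect to the composition
tensor product: its fiber over `n` consists of functions assigning to each
length-`n` list `ψ` over `B` an element of `C` whose arity is the sum of the
arities of the entries of `ψ`. -/
def HomGrd {B C : Type} (b : B → ℕ) (c : C → ℕ) : Type :=
  Σ n : ℕ, ∀ ψ : {l : List B // l.length = n}, {e : C // c e = (ψ.val.map b).sum}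

/-- Morphisms of graded sets: functions commuting with the arity maps. -/
def GrdHom {A B : Type} (a : A → ℕ) (b : B → ℕ) : Type :=
  {f : A → B // ∀ u, b (f u) = a u}

/-- The map `g □ id_B : A' □ B → A □ B` induced by a graded set morphism `g : A' → A`. -/
def sqMapL {A A' B : Type} {a : A → ℕ} {a' : A' → ℕ} {b : B → ℕ}
    (g : GrdHom a' a) : Sq a' b → Sq a b :=
  fun p => ⟨(g.val p.val.1, p.val.2), by rw [g.property]; exact p.property⟩

/-- Postcomposition `[B, k] : [B, C] → [B, C']` with a graded set morphism `k : C → C'`. -/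
def homGrdPost {B C C' : Type} {b : B → ℕ} {c : C → ℕ} {c' : C' → ℕ}
    (k : GrdHom c c') : HomGrd b c → HomGrd b c' :=
  fun h => ⟨h.1, fun ψ => ⟨k.val (h.2 ψ).val, by rw [k.property]; exact (h.2 ψ).property⟩⟩

lemma homGrd_eq {B C : Type} {b : B → ℕ} {c : C → ℕ} (g : HomGrd b c) (n : ℕ) (h : g.1 = n)
    (f : ∀ ψ : {l : List B // l.length = n}, {e : C // c e = (ψ.val.map b).sum})
    (hf : ∀ ψ, (f ψ).val = (g.2 ⟨ψ.val, by rw [ψ.property, h]⟩).val) :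
    (⟨n, f⟩ : HomGrd b c) = g := by
  obtain ⟨m, g2⟩ := g
  dsimp at h
  subst h
  congr 1
  funext ψ
  exact Subtype.ext (hf ψ)

def myE {B : Type} (b : B → ℕ) (A : Type) (a : A → ℕ) (C : Type) (c : C → ℕ) :
    GrdHom (SqAr a b) c ≃ GrdHom a (fun h : HomGrd b c => h.1) where
  toFun F := ⟨fun u => ⟨a u, fun ψ => ⟨F.val ⟨(u, ψ.val), ψ.property.symm⟩,
    F.property ⟨(u, ψ.val), ψ.property.symm⟩⟩⟩, fun _ => rfl⟩
  invFun G := ⟨fun p => ((G.val p.val.1).2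
      ⟨p.val.2, p.property.symm.trans (G.property p.val.1).symm⟩).val,
    fun p => ((G.val p.val.1).2
      ⟨p.val.2, p.property.symm.trans (G.property p.val.1).symm⟩).property⟩
  left_inv F := rfl
  right_inv G := by
    apply Subtype.ext
    funext u
    exact homGrd_eq (G.val u) (a u) (G.property u) _ (fun ψ => rfl)

/-- For a fixed graded set `b : B → ℕ`, the functor `− □ B` has a right adjoint
`[B, −]`: there is a bijection `Hom(A □ B, C) ≃ Hom(A, [B, C])`, natural in `A`
and in `C`; hence the composition tensor product on graded sets is right closed. -/
theorem comp_tensor_right_closed {B : Type} (b : B → ℕ) :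
    ∃ E : ∀ (A : Type) (a : A → ℕ) (C : Type) (c : C → ℕ),
        GrdHom (SqAr a b) c ≃ GrdHom a (fun h : HomGrd b c => h.1),
      (∀ (A : Type) (a : A → ℕ) (A' : Type) (a' : A' → ℕ) (C : Type) (c : C → ℕ)
          (g : GrdHom a' a) (F : GrdHom (SqAr a b) c),
        E A' a' C c ⟨F.val ∘ sqMapL g, fun p => F.property (sqMapL g p)⟩
          = ⟨(E A a C c F).val ∘ g.val,
              fun u => ((E A a C c F).property (g.val u)).trans (g.property u)⟩) ∧
      (∀ (A : Type) (a : A → ℕ) (C : Type) (c : C → ℕ) (C' : Type) (c' : C' → ℕ)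
          (k : GrdHom c c') (F : GrdHom (SqAr a b) c),
        E A a C' c' ⟨k.val ∘ F.val, fun p => (k.property (F.val p)).trans (F.property p)⟩
          = ⟨homGrdPost k ∘ (E A a C c F).val,
              fun u => (E A a C c F).property u⟩) := by
  refine ⟨myE b, ?_, ?_⟩
  · intro A a A' a' C c g F
    apply Subtype.ext
    funext u
    exact homGrd_eq _ (a' u) (g.property u) _ (fun ψ => rfl)
  · intro A a C c C' c' k F
    rfl
end
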